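/- If b ∈ ℝ^d is a constant vector and H_δ(x) = B_δ(x) (full spherical influence region), then for every v ∈ S_δ(Ω) (i.e., v ∈ L²(Ω_δ), v = 0 on Ω_{I_δ}, finite nonlocal energy), the nonlocal convection term vanishes: ∫_Ω (b · G_δ v)(x) v(x) dx = 0. -/

import Mathlib

open MeasureTheory
open scoped RealInnerProductSpace

set_option maxHeartbeats 1000000

/-- The nonlocal gradient `G_δ v (x) = ∫_{B_δ(x)} [(y-x)/|y-x|] γ(|y-x|)(v(y)-v(x)) dy`
(full-ball influence region). -/
noncomputable def nonlocalGradBall (d : ℕ) (δ : ℝ) (γ : ℝ → ℝ)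
    (v : EuclideanSpace ℝ (Fin d) → ℝ) (x : EuclideanSpace ℝ (Fin d)) :
    EuclideanSpace ℝ (Fin d) :=
  ∫ y in Metric.ball x δ, ((v y - v x) * γ (dist y x) / ‖y - x‖) • (y - x)

/-- for a constant velocity `b` and full spherical influence region, the
nonlocal convection term vanishes: `∫_Ω (b · G_δ v) v = 0` for every `v` in the
nonlocal energy space. -/
theorem stmt6 {d : ℕ} {δ : ℝ} (hδ : 0 < δ)
    (Ω Ωδ : Set (EuclideanSpace ℝ (Fin d)))
    (hΩmeas : MeasurableSet Ω) (hΩδmeas : MeasurableSet Ωδ)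
    (hΩopen : IsOpen Ω) (hΩbdd : Bornology.IsBounded Ω) (hsub : Ω ⊆ Ωδ)
    (hball : ∀ x ∈ Ω, Metric.ball x δ ⊆ Ωδ)
    (bconst : EuclideanSpace ℝ (Fin d))
    (γ : ℝ → ℝ) (hγ0 : ∀ r, 0 ≤ γ r) (hγsupp : ∀ r, δ < r → γ r = 0)
    (hmom : Integrable (fun s : EuclideanSpace ℝ (Fin d) => γ ‖s‖ * ‖s‖))
    (v : EuclideanSpace ℝ (Fin d) → ℝ) (hvmeas : Measurable v)
    (hv : ∀ x ∈ Ωδ \ Ω, v x = 0)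
    (hvL2 : IntegrableOn (fun x => v x ^ 2) Ωδ)
    (hint : IntegrableOn
      (fun p : EuclideanSpace ℝ (Fin d) × EuclideanSpace ℝ (Fin d) =>
        γ (dist p.1 p.2) * (|v p.1| + |v p.2|) * (|v p.1| + |v p.2|)) (Ωδ ×ˢ Ωδ)) :
    ∫ x in Ω, ⟪bconst, nonlocalGradBall d δ γ v x⟫ * v x = 0 := by
  rcases Nat.eq_zero_or_pos d with hd | hd
  · subst hd
    have h0 : ∀ x, nonlocalGradBall 0 δ γ v x = 0 := by
      intro x
      have hz : ∀ y : EuclideanSpace ℝ (Fin 0),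
          ((v y - v x) * γ (dist y x) / ‖y - x‖) • (y - x) = (0 : EuclideanSpace ℝ (Fin 0)) := by
        intro y
        have : y - x = 0 := by ext i; exact Fin.elim0 i
        simp [this]
      simp only [nonlocalGradBall, hz, integral_zero]
    simp [h0]
  · haveI hnt : Nontrivial (EuclideanSpace ℝ (Fin d)) := by
      refine ⟨⟨EuclideanSpace.single ⟨0, hd⟩ 1, 0, fun h => ?_⟩⟩
      have h2 := congrArg (fun z : EuclideanSpace ℝ (Fin d) => z ⟨0, hd⟩) h
      simp [EuclideanSpace.single] at h2
    have hsphere : ∀ (x : EuclideanSpace ℝ (Fin d)) (r : ℝ),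
        volume (Metric.sphere x r) = 0 := fun x r => Measure.addHaar_sphere volume x r
    -- the scalar kernel
    set k : EuclideanSpace ℝ (Fin d) → EuclideanSpace ℝ (Fin d) → ℝ :=
      fun x y => γ (dist y x) * ⟪bconst, y - x⟫ / ‖y - x‖ with hkdef
    have hk_bound : ∀ x y, |k x y| ≤ ‖bconst‖ * γ (dist x y) := by
      intro x y
      rcases eq_or_ne y x with rfl | hxy
      · simp only [hkdef, sub_self, norm_zero, div_zero, abs_zero]
        exact mul_nonneg (norm_nonneg _) (hγ0 _)
      · have hn : (0:ℝ) < ‖y - x‖ := by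
          rw [norm_pos_iff, sub_ne_zero]; exact hxy
        rw [hkdef]
        have habs : |γ (dist y x) * ⟪bconst, y - x⟫ / ‖y - x‖|
            = γ (dist y x) * |⟪bconst, y - x⟫| / ‖y - x‖ := by
          rw [abs_div, abs_mul, abs_of_nonneg (hγ0 _), abs_norm]
        rw [habs, div_le_iff₀ hn]
        calc γ (dist y x) * |⟪bconst, y - x⟫|
            ≤ γ (dist y x) * (‖bconst‖ * ‖y - x‖) :=
              mul_le_mul_of_nonneg_left (abs_real_inner_le_norm _ _) (hγ0 _)
          _ = ‖bconst‖ * γ (dist x y) * ‖y - x‖ := by rw [dist_comm]; ring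
    have hk_anti : ∀ x y, k y x = - k x y := by
      intro x y
      rw [hkdef]
      simp only
      rw [dist_comm, show x - y = -(y - x) by abel, inner_neg_right, norm_neg]
      ring
    have hk_zero : ∀ x y, δ < dist y x → k x y = 0 := by
      intro x y h
      rw [hkdef]
      simp [hγsupp _ h]
    -- measurability of the radial factor
    have hzero : volume ({(0 : EuclideanSpace ℝ (Fin d))} :
        Set (EuclideanSpace ℝ (Fin d))) = 0 := by
      have h := hsphere 0 0
      have hs : Metric.sphere (0 : EuclideanSpace ℝ (Fin d)) 0 = {0} := by
        ext y; simp
      rwa [hs] at h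
    have hG0 : AEMeasurable (fun s : EuclideanSpace ℝ (Fin d) => γ ‖s‖) volume := by
      have h1 : AEMeasurable
          (fun s : EuclideanSpace ℝ (Fin d) => γ ‖s‖ * ‖s‖ * ‖s‖⁻¹) volume :=
        hmom.aemeasurable.mul (measurable_norm.inv).aemeasurable
      refine h1.congr ?_
      have hne : ∀ᵐ s : EuclideanSpace ℝ (Fin d) ∂volume, s ≠ 0 := by
        rw [ae_iff]
        simpa using hzero
      filter_upwards [hne] with s hs
      have hns : ‖s‖ ≠ 0 := norm_ne_zero_iff.mpr hs
      rw [mul_assoc, mul_inv_cancel₀ hns, mul_one]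
    have hG0x : ∀ x : EuclideanSpace ℝ (Fin d),
        AEMeasurable (fun y => γ ‖y - x‖) volume := by
      intro x
      have hmp : MeasurePreserving (fun y : EuclideanSpace ℝ (Fin d) => y - x)
          volume volume := by
        simpa [sub_eq_add_neg] using
          measurePreserving_add_right (volume : Measure (EuclideanSpace ℝ (Fin d))) (-x)
      have h3 := hG0.comp_quasiMeasurePreserving hmp.quasiMeasurePreserving
      simpa [Function.comp_def] using h3
    have hprod : AEMeasurable
        (fun p : EuclideanSpace ℝ (Fin d) × EuclideanSpace ℝ (Fin d) => γ ‖p.2 - p.1‖)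
        ((volume : Measure (EuclideanSpace ℝ (Fin d))).prod volume) := by
      have hsnd : AEMeasurable
          (fun p : EuclideanSpace ℝ (Fin d) × EuclideanSpace ℝ (Fin d) => γ ‖p.2‖)
          ((volume : Measure (EuclideanSpace ℝ (Fin d))).prod volume) :=
        hG0.comp_quasiMeasurePreserving Measure.quasiMeasurePreserving_snd
      have hmp : MeasurePreserving
          (fun p : EuclideanSpace ℝ (Fin d) × EuclideanSpace ℝ (Fin d) => (p.1, p.2 - p.1))
          ((volume : Measure (EuclideanSpace ℝ (Fin d))).prod volume)
          ((volume : Measure (EuclideanSpace ℝ (Fin d))).prod volume) :=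
        measurePreserving_prod_sub volume volume
      have h3 := hsnd.comp_quasiMeasurePreserving hmp.quasiMeasurePreserving
      simpa [Function.comp_def] using h3
    -- measurability of the kernel
    have hkx : ∀ x, AEStronglyMeasurable (fun y => k x y) volume := by
      intro x
      have h1 : AEMeasurable (fun y => γ (dist y x)) volume := by
        simpa [dist_eq_norm] using hG0x x
      have hc1 : Continuous (fun y : EuclideanSpace ℝ (Fin d) => ⟪bconst, y - x⟫) :=
        continuous_const.inner (continuous_id.sub continuous_const)
      have hc2 : Continuous (fun y : EuclideanSpace ℝ (Fin d) => ‖y - x‖) :=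
        (continuous_id.sub continuous_const).norm
      have h2 := h1.mul ((hc1.measurable.div hc2.measurable).aemeasurable)
      refine h2.aestronglyMeasurable.congr (Filter.Eventually.of_forall fun y => ?_)
      rw [hkdef]
      simp only
      rw [mul_div_assoc]
      rfl
    have hkprod : AEStronglyMeasurable
        (fun p : EuclideanSpace ℝ (Fin d) × EuclideanSpace ℝ (Fin d) => k p.1 p.2)
        ((volume : Measure (EuclideanSpace ℝ (Fin d))).prod volume) := by
      have h1 : AEMeasurable
          (fun p : EuclideanSpace ℝ (Fin d) × EuclideanSpace ℝ (Fin d) => γ (dist p.2 p.1))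
          ((volume : Measure (EuclideanSpace ℝ (Fin d))).prod volume) := by
        simpa [dist_eq_norm] using hprod
      have hc1 : Continuous
          (fun p : EuclideanSpace ℝ (Fin d) × EuclideanSpace ℝ (Fin d) => ⟪bconst, p.2 - p.1⟫) :=
        continuous_const.inner (continuous_snd.sub continuous_fst)
      have hc2 : Continuous
          (fun p : EuclideanSpace ℝ (Fin d) × EuclideanSpace ℝ (Fin d) => ‖p.2 - p.1‖) :=
        (continuous_snd.sub continuous_fst).norm
      have h2 := h1.mul ((hc1.measurable.div hc2.measurable).aemeasurable)
      refine h2.aestronglyMeasurable.congr (Filter.Eventually.of_forall fun p => ?_)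
      rw [hkdef]
      simp only
      rw [mul_div_assoc]
      rfl
    -- measures
    set ν := (volume : Measure (EuclideanSpace ℝ (Fin d))).restrict Ωδ with hν
    set π := ν.prod ν with hπ
    have hπle : π ≤ (volume : Measure (EuclideanSpace ℝ (Fin d))).prod volume := by
      rw [hπ, hν, Measure.prod_restrict]
      exact Measure.restrict_le_self
    have hkπ : AEStronglyMeasurable
        (fun p : EuclideanSpace ℝ (Fin d) × EuclideanSpace ℝ (Fin d) => k p.1 p.2) π :=
      hkprod.mono_measure hπle
    have hvfst : AEStronglyMeasurable
        (fun p : EuclideanSpace ℝ (Fin d) × EuclideanSpace ℝ (Fin d) => v p.1) π :=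
      (hvmeas.comp measurable_fst).aestronglyMeasurable
    have hvsnd : AEStronglyMeasurable
        (fun p : EuclideanSpace ℝ (Fin d) × EuclideanSpace ℝ (Fin d) => v p.2) π :=
      (hvmeas.comp measurable_snd).aestronglyMeasurable
    -- integrability of the dominating function
    have hQint : Integrable
        (fun p : EuclideanSpace ℝ (Fin d) × EuclideanSpace ℝ (Fin d) =>
          γ (dist p.1 p.2) * (|v p.1| + |v p.2|) * (|v p.1| + |v p.2|)) π := by
      have h := hint
      rw [IntegrableOn, Measure.volume_eq_prod, ← Measure.prod_restrict] at h
      exact h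
    have hdom : Integrable
        (fun p : EuclideanSpace ℝ (Fin d) × EuclideanSpace ℝ (Fin d) =>
          ‖bconst‖ * (γ (dist p.1 p.2) * (|v p.1| + |v p.2|) * (|v p.1| + |v p.2|))) π :=
      hQint.const_mul _
    have hdom_abs : ∀ p : EuclideanSpace ℝ (Fin d) × EuclideanSpace ℝ (Fin d),
        ‖bconst‖ * (γ (dist p.1 p.2) * (|v p.1| + |v p.2|) * (|v p.1| + |v p.2|))
        ≤ ‖‖bconst‖ * (γ (dist p.1 p.2) * (|v p.1| + |v p.2|) * (|v p.1| + |v p.2|))‖ :=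
      fun p => le_abs_self _
    -- the three integrands
    set F : EuclideanSpace ℝ (Fin d) × EuclideanSpace ℝ (Fin d) → ℝ :=
      fun p => v p.1 * ((v p.2 - v p.1) * k p.1 p.2) with hFdef
    set F1 : EuclideanSpace ℝ (Fin d) × EuclideanSpace ℝ (Fin d) → ℝ :=
      fun p => v p.1 * v p.2 * k p.1 p.2 with hF1def
    set F2 : EuclideanSpace ℝ (Fin d) × EuclideanSpace ℝ (Fin d) → ℝ :=
      fun p => v p.1 * v p.1 * k p.1 p.2 with hF2def
    have hFbound : ∀ p : EuclideanSpace ℝ (Fin d) × EuclideanSpace ℝ (Fin d),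
        |F p| ≤ ‖bconst‖ * (γ (dist p.1 p.2) * (|v p.1| + |v p.2|) * (|v p.1| + |v p.2|)) := by
      intro p
      have h1 := hk_bound p.1 p.2
      have h2 := hγ0 (dist p.1 p.2)
      rw [hFdef]
      simp only
      rw [abs_mul, abs_mul]
      calc |v p.1| * (|v p.2 - v p.1| * |k p.1 p.2|)
          ≤ (|v p.1| + |v p.2|) * ((|v p.1| + |v p.2|) * (‖bconst‖ * γ (dist p.1 p.2))) := by
            refine mul_le_mul (by simp [le_add_iff_nonneg_right, abs_nonneg]) ?_ (by positivity) (by positivity)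
            refine mul_le_mul ?_ h1 (abs_nonneg _) (by positivity)
            calc |v p.2 - v p.1| ≤ |v p.2| + |v p.1| := abs_sub _ _
              _ = |v p.1| + |v p.2| := by ring
        _ = ‖bconst‖ * (γ (dist p.1 p.2) * (|v p.1| + |v p.2|) * (|v p.1| + |v p.2|)) := by ring
    have hF1bound : ∀ p : EuclideanSpace ℝ (Fin d) × EuclideanSpace ℝ (Fin d),
        |F1 p| ≤ ‖bconst‖ * (γ (dist p.1 p.2) * (|v p.1| + |v p.2|) * (|v p.1| + |v p.2|)) := by
      intro p
      have h1 := hk_bound p.1 p.2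
      have h2 := hγ0 (dist p.1 p.2)
      rw [hF1def]
      simp only
      rw [abs_mul, abs_mul]
      calc |v p.1| * |v p.2| * |k p.1 p.2|
          ≤ ((|v p.1| + |v p.2|) * (|v p.1| + |v p.2|)) * (‖bconst‖ * γ (dist p.1 p.2)) := by
            refine mul_le_mul ?_ h1 (abs_nonneg _) (by positivity)
            refine mul_le_mul (by simp [le_add_iff_nonneg_right, abs_nonneg]) (by simp [abs_nonneg]) (abs_nonneg _) (by positivity)
        _ = ‖bconst‖ * (γ (dist p.1 p.2) * (|v p.1| + |v p.2|) * (|v p.1| + |v p.2|)) := by ring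
    have hF2bound : ∀ p : EuclideanSpace ℝ (Fin d) × EuclideanSpace ℝ (Fin d),
        |F2 p| ≤ ‖bconst‖ * (γ (dist p.1 p.2) * (|v p.1| + |v p.2|) * (|v p.1| + |v p.2|)) := by
      intro p
      have h1 := hk_bound p.1 p.2
      have h2 := hγ0 (dist p.1 p.2)
      rw [hF2def]
      simp only
      rw [abs_mul, abs_mul]
      calc |v p.1| * |v p.1| * |k p.1 p.2|
          ≤ ((|v p.1| + |v p.2|) * (|v p.1| + |v p.2|)) * (‖bconst‖ * γ (dist p.1 p.2)) := by
            refine mul_le_mul ?_ h1 (abs_nonneg _) (by positivity)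
            refine mul_le_mul (by simp [le_add_iff_nonneg_right, abs_nonneg]) (by simp [le_add_iff_nonneg_right, abs_nonneg]) (abs_nonneg _) (by positivity)
        _ = ‖bconst‖ * (γ (dist p.1 p.2) * (|v p.1| + |v p.2|) * (|v p.1| + |v p.2|)) := by ring
    have hFint : Integrable F π := by
      refine hdom.mono (hvfst.mul ((hvsnd.sub hvfst).mul hkπ)) ?_
      exact Filter.Eventually.of_forall fun p =>
        le_trans (by simpa [Real.norm_eq_abs] using hFbound p) (hdom_abs p)
    have hF1int : Integrable F1 π := by
      refine hdom.mono ((hvfst.mul hvsnd).mul hkπ) ?_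
      exact Filter.Eventually.of_forall fun p =>
        le_trans (by simpa [Real.norm_eq_abs] using hF1bound p) (hdom_abs p)
    have hF2int : Integrable F2 π := by
      refine hdom.mono ((hvfst.mul hvfst).mul hkπ) ?_
      exact Filter.Eventually.of_forall fun p =>
        le_trans (by simpa [Real.norm_eq_abs] using hF2bound p) (hdom_abs p)
    -- oddness of the kernel on balls
    have hodd : ∀ x, (∫ y in Metric.ball x δ, k x y) = 0 := by
      intro x
      have hmp : MeasurePreserving (fun y : EuclideanSpace ℝ (Fin d) => (x + x) - y)
          volume volume := by
        have h1 := Measure.measurePreserving_neg (volume : Measure (EuclideanSpace ℝ (Fin d)))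
        have h2 := measurePreserving_add_left (volume : Measure (EuclideanSpace ℝ (Fin d))) (x + x)
        have h3 := h2.comp h1
        simpa [Function.comp_def, sub_eq_add_neg] using h3
      have hpre : (fun y : EuclideanSpace ℝ (Fin d) => (x + x) - y) ⁻¹' Metric.ball x δ
          = Metric.ball x δ := by
        ext y
        simp only [Set.mem_preimage, Metric.mem_ball, dist_eq_norm]
        have h4 : x + x - y - x = -(y - x) := by abel
        rw [h4, norm_neg]
      have hmp2 : MeasurePreserving (fun y : EuclideanSpace ℝ (Fin d) => (x + x) - y)
          (volume.restrict (Metric.ball x δ)) (volume.restrict (Metric.ball x δ)) := by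
        have h5 := hmp.restrict_preimage (measurableSet_ball (x := x) (ε := δ))
        rwa [hpre] at h5
      have heq : ∫ y in Metric.ball x δ, k x y = ∫ y in Metric.ball x δ, k x ((x + x) - y) := by
        conv_lhs => rw [← hmp2.map_eq]
        exact integral_map hmp2.measurable.aemeasurable
          (by rw [hmp2.map_eq]; exact (hkx x).restrict)
      have hneg : ∀ y, k x ((x + x) - y) = - k x y := by
        intro y
        have h6 : (x + x) - y - x = -(y - x) := by abel
        rw [hkdef]
        simp only
        rw [dist_eq_norm, dist_eq_norm, h6, norm_neg, inner_neg_right]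
        ring
      have h7 : ∫ y in Metric.ball x δ, k x ((x + x) - y) = - ∫ y in Metric.ball x δ, k x y := by
        simp only [hneg]
        exact integral_neg _
      have h8 := heq.trans h7
      linarith
    -- a.e. points avoid the sphere
    have hsphae : ∀ x : EuclideanSpace ℝ (Fin d),
        ∀ᵐ y ∂(volume : Measure (EuclideanSpace ℝ (Fin d))), ¬ (dist y x = δ) := by
      intro x
      rw [ae_iff]
      simpa [Metric.sphere, not_not] using hsphere x δ
    -- extending integrals over the ball to Ωδ
    have hext : ∀ x ∈ Ω, ∀ f : EuclideanSpace ℝ (Fin d) → ℝ,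
        (∀ y, δ < dist y x → f y = 0) →
        ∫ y in Ωδ, f y = ∫ y in Metric.ball x δ, f y := by
      intro x hx f hf
      refine setIntegral_eq_of_subset_of_ae_diff_eq_zero hΩδmeas.nullMeasurableSet
        (hball x hx) ?_
      filter_upwards [hsphae x] with y hy hymem
      have hge : δ ≤ dist y x := not_lt.mp (by simpa [Metric.mem_ball] using hymem.2)
      exact hf y (lt_of_le_of_ne hge (Ne.symm hy))
    -- Step A : pointwise identity a.e. on Ω
    have hQae : ∀ᵐ x ∂ν, Integrable
        (fun y => γ (dist x y) * (|v x| + |v y|) * (|v x| + |v y|)) ν :=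
      hQint.prod_right_ae
    have hQaeΩ : ∀ᵐ x ∂((volume : Measure (EuclideanSpace ℝ (Fin d))).restrict Ω),
        Integrable (fun y => γ (dist x y) * (|v x| + |v y|) * (|v x| + |v y|)) ν :=
      hQae.filter_mono (ae_mono (Measure.restrict_mono hsub le_rfl))
    have keyA : ∀ᵐ x ∂((volume : Measure (EuclideanSpace ℝ (Fin d))).restrict Ω),
        ⟪bconst, nonlocalGradBall d δ γ v x⟫ * v x = ∫ y in Ωδ, F (x, y) := by
      filter_upwards [hQaeΩ, ae_restrict_mem hΩmeas] with x hQx hxΩ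
      by_cases hvx : v x = 0
      · simp [hFdef, hvx]
      · have hA : (0:ℝ) < |v x| := abs_pos.mpr hvx
        -- integrability of the vector-valued integrand
        have haesm : AEStronglyMeasurable
            (fun y => ((v y - v x) * γ (dist y x) / ‖y - x‖) • (y - x)) volume := by
          have hg : AEMeasurable (fun y => γ (dist y x)) volume := by
            simpa [dist_eq_norm] using hG0x x
          have hc2 : Continuous (fun y : EuclideanSpace ℝ (Fin d) => ‖y - x‖) :=
            (continuous_id.sub continuous_const).norm
          have h1 : AEMeasurable (fun y => (v y - v x) * γ (dist y x) / ‖y - x‖) volume :=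
            ((hvmeas.aemeasurable.sub aemeasurable_const).mul hg).div
              hc2.measurable.aemeasurable
          exact h1.aestronglyMeasurable.smul
            ((measurable_id.sub measurable_const).aestronglyMeasurable
              (μ := (volume : Measure (EuclideanSpace ℝ (Fin d)))))
        have hubΩδ : Integrable
            (fun y => ((v y - v x) * γ (dist y x) / ‖y - x‖) • (y - x)) ν := by
          refine (hQx.const_mul (|v x|⁻¹)).mono (haesm.restrict) ?_
          refine Filter.Eventually.of_forall fun y => ?_
          rw [norm_smul, Real.norm_eq_abs, Real.norm_eq_abs]
          have hRnn : (0:ℝ) ≤ |v x|⁻¹ * (γ (dist x y) * (|v x| + |v y|) * (|v x| + |v y|)) :=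
            mul_nonneg (inv_nonneg.mpr (abs_nonneg _))
              (mul_nonneg (mul_nonneg (hγ0 _) (by positivity)) (by positivity))
        
          rw [abs_of_nonneg hRnn]
          rcases eq_or_ne y x with rfl | hxy
          · simpa using hRnn
          · have hn : (0:ℝ) < ‖y - x‖ := by rw [norm_pos_iff, sub_ne_zero]; exact hxy
            have hstep : |(v y - v x) * γ (dist y x) / ‖y - x‖| * ‖y - x‖
                = |v y - v x| * γ (dist y x) := by
              rw [abs_div, abs_mul, abs_of_nonneg (hγ0 _), abs_norm, div_mul_cancel₀]
              exact hn.ne'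
            rw [hstep, dist_comm y x]
            rw [inv_mul_eq_div, le_div_iff₀ hA]
            have habs2 : |v y - v x| ≤ |v x| + |v y| := by
              calc |v y - v x| ≤ |v y| + |v x| := abs_sub _ _
                _ = |v x| + |v y| := by ring
            calc |v y - v x| * γ (dist x y) * |v x|
                ≤ (|v x| + |v y|) * γ (dist x y) * (|v x| + |v y|) := by
                  refine mul_le_mul (mul_le_mul_of_nonneg_right habs2 (hγ0 _)) ?_ hA.le
                    (mul_nonneg (by positivity) (hγ0 _))
                  simp [le_add_iff_nonneg_right, abs_nonneg]
              _ = γ (dist x y) * (|v x| + |v y|) * (|v x| + |v y|) := by ring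
        have hub : Integrable
            (fun y => ((v y - v x) * γ (dist y x) / ‖y - x‖) • (y - x))
            (volume.restrict (Metric.ball x δ)) := by
          rw [hν] at hubΩδ
          exact MeasureTheory.IntegrableOn.mono_set hubΩδ (hball x hxΩ)
        have h0 := integral_inner (𝕜 := ℝ) hub bconst
        have h1 : ⟪bconst, nonlocalGradBall d δ γ v x⟫
            = ∫ y in Metric.ball x δ, (v y - v x) * k x y := by
          unfold nonlocalGradBall
          rw [← h0]
          refine integral_congr_ae (Filter.Eventually.of_forall fun y => ?_)
          simp only
          rw [real_inner_smul_right, hkdef]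
          simp only
          ring
        calc ⟪bconst, nonlocalGradBall d δ γ v x⟫ * v x
            = v x * ∫ y in Metric.ball x δ, (v y - v x) * k x y := by rw [h1]; ring
          _ = ∫ y in Metric.ball x δ, v x * ((v y - v x) * k x y) :=
              (integral_const_mul _ _).symm
          _ = ∫ y in Metric.ball x δ, F (x, y) := by rw [hFdef]
          _ = ∫ y in Ωδ, F (x, y) := by
              refine (hext x hxΩ _ fun y hy => ?_).symm
              rw [hFdef]
              simp [hk_zero x y hy]
    -- the chain of equalities
    have step1 : ∫ x in Ω, ⟪bconst, nonlocalGradBall d δ γ v x⟫ * v x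
        = ∫ x in Ω, ∫ y in Ωδ, F (x, y) := integral_congr_ae keyA
    have step2 : ∫ x in Ω, ∫ y in Ωδ, F (x, y) = ∫ x in Ωδ, ∫ y in Ωδ, F (x, y) := by
      refine (setIntegral_eq_of_subset_of_forall_diff_eq_zero hΩδmeas hsub ?_).symm
      intro x hx
      rw [hFdef]
      simp [hv x hx]
    have step3 : ∫ x in Ωδ, ∫ y in Ωδ, F (x, y) = ∫ p, F p ∂π := by
      have h := integral_integral (f := fun x y => F (x, y)) (μ := ν) (ν := ν)
        (by simpa [Function.uncurry_def] using hFint)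
      simpa using h
    have hsplit : ∀ p : EuclideanSpace ℝ (Fin d) × EuclideanSpace ℝ (Fin d),
        F p = F1 p - F2 p := by
      intro p
      rw [hFdef, hF1def, hF2def]
      simp only
      ring
    have step5 : ∫ p, F1 p ∂π = 0 := by
      have hswapmp : MeasurePreserving Prod.swap π π := Measure.measurePreserving_swap
      have h51 : ∫ p, F1 p ∂π = ∫ p, F1 (Prod.swap p) ∂π := by
        conv_lhs => rw [← hswapmp.map_eq]
        exact integral_map hswapmp.measurable.aemeasurable
          (by rw [hswapmp.map_eq]; exact hF1int.aestronglyMeasurable)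
      have h52 : ∀ p : EuclideanSpace ℝ (Fin d) × EuclideanSpace ℝ (Fin d),
          F1 (Prod.swap p) = - F1 p := by
        intro p
        rw [hF1def]
        simp only [Prod.swap]
        rw [hk_anti p.1 p.2]
        ring
      have h53 : ∫ p, F1 p ∂π = - ∫ p, F1 p ∂π := by
        conv_lhs => rw [h51]
        simp only [h52]
        exact integral_neg _
      linarith
    have step6 : ∫ p, F2 p ∂π = 0 := by
      have h61 : ∫ p, F2 p ∂π = ∫ x, (∫ y, F2 (x, y) ∂ν) ∂ν := by
        have h := integral_integral (f := fun x y => F2 (x, y)) (μ := ν) (ν := ν)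
          (by simpa [Function.uncurry_def] using hF2int)
        simpa using h.symm
      rw [h61]
      have h62 : ∀ᵐ x ∂ν, (∫ y, F2 (x, y) ∂ν) = 0 := by
        filter_upwards [ae_restrict_mem hΩδmeas] with x hx
        by_cases hvx : v x = 0
        · rw [hF2def]
          simp [hvx]
        · have hxΩ : x ∈ Ω := by
            by_contra h
            exact hvx (hv x ⟨hx, h⟩)
          have he : (∫ y, F2 (x, y) ∂ν) = ∫ y in Metric.ball x δ, F2 (x, y) := by
            refine hext x hxΩ _ fun y hy => ?_
            rw [hF2def]
            simp [hk_zero x y hy]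
          rw [he]
          have hc : ∫ y in Metric.ball x δ, F2 (x, y)
              = (v x * v x) * ∫ y in Metric.ball x δ, k x y := by
            rw [hF2def]
            simp only
            exact integral_const_mul _ _
          rw [hc, hodd x, mul_zero]
      calc ∫ x, (∫ y, F2 (x, y) ∂ν) ∂ν = ∫ _x, (0:ℝ) ∂ν := integral_congr_ae h62
        _ = 0 := integral_zero _ _
    have step4 : ∫ p, F p ∂π = (∫ p, F1 p ∂π) - ∫ p, F2 p ∂π := by
      simp only [hsplit]
      exact integral_sub hF1int hF2int
    rw [step1, step2, step3, step4, step5, step6]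
    norm_num
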